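/- Let P : C̃ → C together with ramification numbers e be a d-fold ramified covering of finite categories. Then the zeta function of C divides that of C̃; precisely, as formal power series over ℚ, ζ_{C̃}(z) = ζ_C(z)^d · (1 − z)^V, where V = Σ_{x̃ ∈ Ob(C̃)} (e(x̃) − 1) (a nonnegative integer). -/

import Mathlib

open CategoryTheory

universe u

/-- The set of morphisms of `C` with target `x`, encoded as a sigma type. -/
abbrev Tgt (C : Type u) [SmallCategory C] (x : C) : Type u := Σ a : C, a ⟶ x

/-- The set of morphisms of `C` with source `x`, encoded as a sigma type. -/
abbrev Src (C : Type u) [SmallCategory C] (x : C) : Type u := Σ b : C, x ⟶ b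

/-- The map `T(x̃) → T(P x̃)` induced by a functor `P`. -/
def tgtMap {D C : Type u} [SmallCategory D] [SmallCategory C] (P : D ⥤ C) (x : D) :
    Tgt D x → Tgt C (P.obj x) := fun g => ⟨P.obj g.1, P.map g.2⟩

/-- The map `S(x̃) → S(P x̃)` induced by a functor `P`. -/
def srcMap {D C : Type u} [SmallCategory D] [SmallCategory C] (P : D ⥤ C) (x : D) :
    Src D x → Src C (P.obj x) := fun g => ⟨P.obj g.1, P.map g.2⟩

/-- `P : D ⥤ C` together with ramification numbers `e` is a ramified covering:
`C` is connected, `e x ≥ 1` for all `x`, `P : T(x̃) → T(P x̃)` is bijective,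
every morphism of `S̄(P x̃)` has exactly `e x̃` preimages in `S̄(x̃)`, and
`e x̃ = 1` whenever `S̄(P x̃)` is empty. -/
structure IsRamifiedCovering {D C : Type u} [SmallCategory D] [SmallCategory C]
    (P : D ⥤ C) (e : D → ℕ) : Prop where
  nonempty : Nonempty C
  zigzag : ∀ x y : C, Zigzag x y
  one_le : ∀ x : D, 1 ≤ e x
  tgt_bij : ∀ x : D, Function.Bijective (tgtMap P x)
  src_count : ∀ (x : D) (g : Src C (P.obj x)), g ≠ ⟨P.obj x, 𝟙 (P.obj x)⟩ →
    Nat.card {h : Src D x // h ≠ ⟨x, 𝟙 x⟩ ∧ srcMap P x h = g} = e x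
  ram_one : ∀ x : D, (∀ g : Src C (P.obj x), g = ⟨P.obj x, 𝟙 (P.obj x)⟩) → e x = 1


/-- A composable chain of `n` morphisms `x₀ → x₁ → ⋯ → xₙ` in `C`
(an element of `N_n(C)`). -/
structure Chain (C : Type u) [SmallCategory C] (n : ℕ) : Type u where
  obj : Fin (n + 1) → C
  map : ∀ i : Fin n, obj i.castSucc ⟶ obj i.succ

/-- A chain is non-degenerate if none of its morphisms is an identity
(an element of `N̄_n(C)`). -/
def Chain.NonDeg {C : Type u} [SmallCategory C] {n : ℕ} (c : Chain C n) : Prop :=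
  ∀ i : Fin n,
    (⟨c.obj i.succ, c.map i⟩ : Src C (c.obj i.castSucc)) ≠ ⟨c.obj i.castSucc, 𝟙 _⟩

/-- The image of a chain under a functor `P`. -/
def Chain.push {D C : Type u} [SmallCategory D] [SmallCategory C] (P : D ⥤ C) {n : ℕ}
    (c : Chain D n) : Chain C n :=
  ⟨fun i => P.obj (c.obj i), fun i => P.map (c.map i)⟩

/-- The constant identity chain `1_x` at an object `x`. -/
def Chain.const (C : Type u) [SmallCategory C] (x : C) (n : ℕ) : Chain C n :=
  ⟨fun _ => x, fun _ => 𝟙 x⟩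

/-- `P` is a `d`-fold ramified covering: for every object `x` of `C`, the multiset
`R(x)` of objects over `x`, each counted with multiplicity its ramification number,
has cardinality `d`, i.e. `Σ_{P xt = x} e(xt) = d`. -/
def IsDFold {D C : Type u} [SmallCategory D] [SmallCategory C]
    (P : D ⥤ C) (e : D → ℕ) (d : ℕ) : Prop :=
  ∀ x : C, Nat.card (Σ a : {a : D // P.obj a = x}, Fin (e a.1)) = d

/-- The formal exponential `exp(f) = Σ_k f^k / k!` of a power series `f` over `ℚ`
(defined coefficientwise; it agrees with the usual exponential when the constant
term of `f` vanishes, since then `f^k` contributes nothing in degrees `< k`). -/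
noncomputable def formalExp (f : PowerSeries ℚ) : PowerSeries ℚ :=
  PowerSeries.mk fun n =>
    ∑ k ∈ Finset.range (n + 1), PowerSeries.coeff n (f ^ k) / (Nat.factorial k)

/-- The zeta function of a finite category `C`:
`ζ_C(z) = exp (Σ_{m ≥ 1} (#N_m(C) / m) z^m) ∈ ℚ⟦z⟧`. -/
noncomputable def catZeta (C : Type u) [SmallCategory C] : PowerSeries ℚ :=
  formalExp (PowerSeries.mk fun m => if m = 0 then 0 else (Nat.card (Chain C m) : ℚ) / m)

section ExpAuxSec
open PowerSeries
namespace ExpAux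

lemma coeff_pow_eq_zero {f : ℚ⟦X⟧} (hf : constantCoeff f = 0) {n k : ℕ} (h : n < k) :
    coeff n (f ^ k) = 0 := by
  have hdvd : (X : ℚ⟦X⟧) ^ k ∣ f ^ k := pow_dvd_pow_of_dvd (X_dvd_iff.2 hf) k
  exact (X_pow_dvd_iff.1 hdvd) n h

noncomputable def S (f : ℚ⟦X⟧) (N : ℕ) : ℚ⟦X⟧ :=
  ∑ k ∈ Finset.range (N + 1), ((Nat.factorial k : ℚ))⁻¹ • f ^ k

lemma coeff_S (f : ℚ⟦X⟧) (N n : ℕ) :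
    coeff n (S f N) = ∑ k ∈ Finset.range (N + 1), coeff n (f ^ k) / (Nat.factorial k) := by
  rw [S, map_sum]
  refine Finset.sum_congr rfl fun k _ => ?_
  rw [map_smul, smul_eq_mul, div_eq_inv_mul]

lemma coeff_formalExp_eq {f : ℚ⟦X⟧} (hf : constantCoeff f = 0) {n N : ℕ} (hn : n ≤ N) :
    coeff n (formalExp f) = coeff n (S f N) := by
  rw [formalExp, coeff_mk, coeff_S]
  refine Finset.sum_subset (by intro k hk; simp at hk ⊢; omega) ?_
  intro k hk hk'
  simp only [Finset.mem_range] at hk hk'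
  rw [coeff_pow_eq_zero hf (by omega), zero_div]

lemma constantCoeff_formalExp (f : ℚ⟦X⟧) : constantCoeff (formalExp f) = 1 := by
  rw [← coeff_zero_eq_constantCoeff_apply, formalExp, coeff_mk]
  simp

lemma formalExp_zero : formalExp (0 : ℚ⟦X⟧) = 1 := by
  ext n
  rw [formalExp, coeff_mk]
  rcases n with _ | n
  · simp
  · rw [Finset.sum_eq_zero, PowerSeries.coeff_one, if_neg (by omega)]
    intro k hk
    rcases k with _ | k
    · simp [PowerSeries.coeff_one]
    · rw [zero_pow (by omega), map_zero, zero_div]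

lemma D_S (f : ℚ⟦X⟧) (N : ℕ) :
    d⁄dX ℚ (S f (N + 1)) = d⁄dX ℚ f * S f N := by
  have hmap : d⁄dX ℚ (S f (N + 1)) =
      ∑ k ∈ Finset.range (N + 2), ((Nat.factorial k : ℚ))⁻¹ • d⁄dX ℚ (f ^ k) := by
    rw [S]
    rw [show ((d⁄dX ℚ) (∑ k ∈ Finset.range (N + 1 + 1), ((Nat.factorial k : ℚ))⁻¹ • f ^ k))
        = (d⁄dX ℚ).toLinearMap (∑ k ∈ Finset.range (N + 1 + 1), ((Nat.factorial k : ℚ))⁻¹ • f ^ k)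
        from rfl, map_sum]
    refine Finset.sum_congr rfl fun k _ => ?_
    exact Derivation.map_smul _ _ _
  rw [hmap, Finset.sum_range_succ']
  have h0 : ((Nat.factorial 0 : ℚ))⁻¹ • d⁄dX ℚ (f ^ 0) = 0 := by
    simp [Derivation.map_one_eq_zero]
  rw [h0, add_zero, S, Finset.mul_sum]
  refine Finset.sum_congr rfl fun k _ => ?_
  rw [Derivation.leibniz_pow]
  have hsmul : ((k : ℕ) + 1) • (f ^ (k + 1 - 1) • d⁄dX ℚ f)
      = (((k : ℚ) + 1)) • (f ^ k • d⁄dX ℚ f) := by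
    rw [Nat.add_sub_cancel]
    rw [← Nat.cast_smul_eq_nsmul ℚ]
    push_cast
    ring_nf
  rw [hsmul, smul_smul]
  have hfact : ((Nat.factorial (k + 1) : ℚ))⁻¹ * ((k : ℚ) + 1) = ((Nat.factorial k : ℚ))⁻¹ := by
    rw [Nat.factorial_succ]
    push_cast
    rw [mul_inv]
    have : ((k : ℚ) + 1) ≠ 0 := by positivity
    field_simp
  rw [hfact, smul_eq_mul, mul_smul_comm, mul_comm (f ^ k) (d⁄dX ℚ f)]

lemma ode_unique {p u v : ℚ⟦X⟧} (hu : d⁄dX ℚ u = p * u) (hv : d⁄dX ℚ v = p * v)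
    (h0 : constantCoeff u = constantCoeff v) : u = v := by
  ext n
  induction n using Nat.strong_induction_on with
  | _ n ih =>
    rcases n with _ | n
    · simpa [coeff_zero_eq_constantCoeff_apply] using h0
    · have h1 := congrArg (coeff n) hu
      have h2 := congrArg (coeff n) hv
      rw [coeff_derivative] at h1 h2
      have hsum : coeff n (p * u) = coeff n (p * v) := by
        rw [coeff_mul, coeff_mul]
        refine Finset.sum_congr rfl fun x hx => ?_
        have hxn : x.2 < n + 1 := by
          have := Finset.HasAntidiagonal.antidiagonal.snd_le hx
          omega
        rw [ih x.2 hxn]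
      have := h1.trans (hsum.trans h2.symm)
      have hne : ((n : ℚ) + 1) ≠ 0 := by positivity
      exact mul_right_cancel₀ hne this

lemma D_formalExp {f : ℚ⟦X⟧} (hf : constantCoeff f = 0) :
    d⁄dX ℚ (formalExp f) = d⁄dX ℚ f * formalExp f := by
  ext n
  rw [coeff_derivative, coeff_formalExp_eq hf (Nat.le_refl (n+1)), ← coeff_derivative, D_S]
  rw [coeff_mul, coeff_mul]
  refine Finset.sum_congr rfl fun x hx => ?_
  have hxn : x.2 ≤ n := Finset.HasAntidiagonal.antidiagonal.snd_le hx
  rw [coeff_formalExp_eq hf hxn]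

lemma formalExp_add {f g : ℚ⟦X⟧} (hf : constantCoeff f = 0) (hg : constantCoeff g = 0) :
    formalExp (f + g) = formalExp f * formalExp g := by
  refine ode_unique (p := d⁄dX ℚ (f + g)) (D_formalExp (by rw [map_add, hf, hg, add_zero])) ?_ ?_
  · rw [Derivation.leibniz, smul_eq_mul, smul_eq_mul, D_formalExp hf, D_formalExp hg, map_add]
    ring
  · rw [constantCoeff_formalExp, map_mul, constantCoeff_formalExp, constantCoeff_formalExp]
    norm_num

lemma formalExp_nsmul {f : ℚ⟦X⟧} (hf : constantCoeff f = 0) (k : ℕ) :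
    formalExp (k • f) = formalExp f ^ k := by
  induction k with
  | zero => rw [zero_smul, pow_zero, formalExp_zero]
  | succ k ih =>
      rw [succ_nsmul, formalExp_add (by rw [map_nsmul, hf, smul_zero]) hf, ih, pow_succ]

noncomputable def L : ℚ⟦X⟧ := PowerSeries.mk fun m => if m = 0 then 0 else -1 / m

lemma formalExp_L : formalExp L = 1 - X := by
  have hL0 : constantCoeff L = 0 := by
    rw [← coeff_zero_eq_constantCoeff_apply, L, coeff_mk, if_pos rfl]
  have hDL : d⁄dX ℚ L = PowerSeries.mk fun _ => (-1 : ℚ) := by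
    ext n
    rw [coeff_derivative, L, coeff_mk, coeff_mk, if_neg (by omega)]
    have : ((n : ℚ) + 1) ≠ 0 := by positivity
    push_cast
    field_simp
  have h1X : d⁄dX ℚ ((1 : ℚ⟦X⟧) - X) = -1 := by
    rw [Derivation.map_sub, Derivation.map_one_eq_zero, derivative_X, zero_sub]
  have key : d⁄dX ℚ L * (1 - X) = d⁄dX ℚ (1 - X) := by
    rw [hDL, h1X]
    ext n
    rw [mul_sub, mul_one, map_sub, coeff_mk]
    rcases n with _ | n
    · rw [coeff_zero_mul_X]
      simp
    · rw [coeff_succ_mul_X, coeff_mk]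
      simp [PowerSeries.coeff_one, Nat.succ_ne_zero]
  refine ode_unique (p := d⁄dX ℚ L) (D_formalExp hL0) key.symm ?_
  rw [constantCoeff_formalExp]
  simp

end ExpAux
end ExpAuxSec

namespace RamAux

section Cat

variable {D C : Type u} [SmallCategory D] [SmallCategory C]

lemma sigma_snd_eq {w : C} {s1 s2 : Src C w} (h : s1 = s2) :
    s1.2 ≫ eqToHom (congrArg Sigma.fst h) = s2.2 := by
  subst h; simp

lemma tgt_snd_eq {y : C} {t1 t2 : Tgt C y} (h : t1 = t2) :
    t1.2 = eqToHom (congrArg Sigma.fst h) ≫ t2.2 := by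
  subst h; simp

lemma Tgt.ext' {y : C} {t t' : Tgt C y} (h1 : t.1 = t'.1)
    (h2 : t.2 = eqToHom h1 ≫ t'.2) : t = t' := by
  obtain ⟨a, f⟩ := t; obtain ⟨a', f'⟩ := t'
  dsimp at h1; subst h1
  dsimp at h2; rw [Category.id_comp] at h2
  rw [h2]

lemma Src.ext' {w : C} {s s' : Src C w} (h1 : s.1 = s'.1)
    (h2 : s.2 ≫ eqToHom h1 = s'.2) : s = s' := by
  obtain ⟨a, f⟩ := s; obtain ⟨a', f'⟩ := s'
  dsimp at h1; subst h1
  dsimp at h2; rw [Category.comp_id] at h2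
  rw [h2]

def castSrc {z z' : C} (h : z = z') (s : Src C z) : Src C z' :=
  ⟨s.1, eqToHom h.symm ≫ s.2⟩

lemma castSrc_eqself {z : C} (h : z = z) (s : Src C z) : castSrc h s = s := by
  cases s; simp [castSrc]

lemma castSrc_cancel {z z' : C} (h : z = z') (s : Src C z) :
    castSrc h.symm (castSrc h s) = s := by
  subst h; rw [castSrc_eqself, castSrc_eqself]

lemma Chain.ext' {n : ℕ} {c1 c2 : Chain C n} (ho : ∀ i, c1.obj i = c2.obj i)
    (hm : ∀ i : Fin n, c1.map i ≫ eqToHom (ho i.succ) = eqToHom (ho i.castSucc) ≫ c2.map i) :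
    c1 = c2 := by
  obtain ⟨o1, m1⟩ := c1; obtain ⟨o2, m2⟩ := c2
  have hobj : o1 = o2 := funext ho
  subst hobj
  have hmm : m1 = m2 := by
    funext i
    have := hm i
    simpa using this
  rw [hmm]

lemma Chain.map_congr {n : ℕ} {c1 c2 : Chain C n} (h : c1 = c2) (i : Fin n) :
    c1.map i ≫ eqToHom (congrArg (fun c => Chain.obj c i.succ) h)
      = eqToHom (congrArg (fun c => Chain.obj c i.castSucc) h) ≫ c2.map i := by
  subst h; simp

instance chainFinite [Finite C] [∀ a b : C, Finite (a ⟶ b)] (n : ℕ) :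
    Finite (Chain C n) := by
  let emb : Chain C n → Σ f : Fin (n + 1) → C, ∀ i : Fin n, (f i.castSucc ⟶ f i.succ) :=
    fun c => ⟨c.obj, c.map⟩
  have hinj : Function.Injective emb := by
    intro c c' h
    have hobj : c.obj = c'.obj := congrArg Sigma.fst h
    obtain ⟨o, m⟩ := c; obtain ⟨o', m'⟩ := c'
    dsimp at hobj
    subst hobj
    have h2 : HEq m m' := by
      have := (Sigma.mk.inj_iff.mp h).2
      exact this
    rw [eq_of_heq h2]
  exact Finite.of_injective emb hinj

end Cat

section Cover

variable {D C : Type u} [SmallCategory D] [SmallCategory C]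
  {P : D ⥤ C} {e : D → ℕ} (hcov : IsRamifiedCovering P e)

include hcov

noncomputable def liftTgt (x : D) (t : Tgt C (P.obj x)) : Tgt D x :=
  Function.surjInv (hcov.tgt_bij x).2 t

lemma liftTgt_spec (x : D) (t : Tgt C (P.obj x)) :
    tgtMap P x (liftTgt hcov x t) = t :=
  Function.surjInv_eq (hcov.tgt_bij x).2 t

lemma lift_unique {m : ℕ} (c1 c2 : Chain D m) (hp : c1.push P = c2.push P)
    (hl : c1.obj (Fin.last m) = c2.obj (Fin.last m)) : c1 = c2 := by
  have hobjP : ∀ j, P.obj (c1.obj j) = P.obj (c2.obj j) :=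
    fun j => congrArg (fun p => Chain.obj p j) hp
  have hmapP : ∀ i : Fin m, P.map (c1.map i) ≫ eqToHom (hobjP i.succ)
      = eqToHom (hobjP i.castSucc) ≫ P.map (c2.map i) := fun i => Chain.map_congr hp i
  have key : ∀ (i : Fin m) (ih : c1.obj i.succ = c2.obj i.succ),
      (⟨c1.obj i.castSucc, c1.map i⟩ : Tgt D (c1.obj i.succ))
        = ⟨c2.obj i.castSucc, c2.map i ≫ eqToHom ih.symm⟩ := by
    intro i ih
    apply (hcov.tgt_bij (c1.obj i.succ)).1
    apply Tgt.ext' (h1 := hobjP i.castSucc)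
    dsimp [tgtMap]
    rw [Functor.map_comp, eqToHom_map, ← Category.assoc, ← hmapP i]
    simp
  have hobj : ∀ i, c1.obj i = c2.obj i := by
    intro i
    induction i using Fin.reverseInduction with
    | last => exact hl
    | cast i ih => exact congrArg Sigma.fst (key i ih)
  refine Chain.ext' hobj ?_
  intro i
  have h3 := key i (hobj i.succ)
  have h4 := tgt_snd_eq h3
  dsimp only at h4
  rw [h4]
  simp

noncomputable def liftStep {m : ℕ} (c : Chain C m) (i : Fin m)
    (ih : {a : D // P.obj a = c.obj i.succ}) : {a : D // P.obj a = c.obj i.castSucc} :=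
  ⟨(liftTgt hcov ih.1 ⟨c.obj i.castSucc, c.map i ≫ eqToHom ih.2.symm⟩).1,
   congrArg Sigma.fst (liftTgt_spec hcov ih.1 _)⟩

noncomputable def liftObj {m : ℕ} (c : Chain C m) (x : D) (hx : P.obj x = c.obj (Fin.last m)) :
    ∀ i : Fin (m + 1), {a : D // P.obj a = c.obj i} :=
  Fin.reverseInduction ⟨x, hx⟩ (liftStep hcov c)

lemma liftObj_last {m : ℕ} (c : Chain C m) (x : D) (hx : P.obj x = c.obj (Fin.last m)) :
    liftObj hcov c x hx (Fin.last m) = ⟨x, hx⟩ :=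
  Fin.reverseInduction_last

lemma liftObj_castSucc {m : ℕ} (c : Chain C m) (x : D) (hx : P.obj x = c.obj (Fin.last m))
    (i : Fin m) :
    liftObj hcov c x hx i.castSucc = liftStep hcov c i (liftObj hcov c x hx i.succ) :=
  Fin.reverseInduction_castSucc i

noncomputable def liftChain {m : ℕ} (c : Chain C m) (x : D)
    (hx : P.obj x = c.obj (Fin.last m)) : Chain D m where
  obj i := (liftObj hcov c x hx i).1
  map i := eqToHom (congrArg Subtype.val (liftObj_castSucc hcov c x hx i)) ≫
    (liftTgt hcov (liftObj hcov c x hx i.succ).1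
      ⟨c.obj i.castSucc, c.map i ≫ eqToHom (liftObj hcov c x hx i.succ).2.symm⟩).2

lemma liftChain_push {m : ℕ} (c : Chain C m) (x : D)
    (hx : P.obj x = c.obj (Fin.last m)) : (liftChain hcov c x hx).push P = c := by
  refine Chain.ext' (fun i => (liftObj hcov c x hx i).2) ?_
  intro i
  have hspec := liftTgt_spec hcov (liftObj hcov c x hx i.succ).1
    ⟨c.obj i.castSucc, c.map i ≫ eqToHom (liftObj hcov c x hx i.succ).2.symm⟩
  have hsnd := tgt_snd_eq hspec
  dsimp [tgtMap] at hsnd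
  show P.map ((liftChain hcov c x hx).map i) ≫ _ = _
  dsimp only [liftChain]
  erw [Functor.map_comp, eqToHom_map, hsnd]
  erw [Category.assoc, Category.assoc, eqToHom_trans_assoc, Category.assoc, eqToHom_trans, eqToHom_refl,
    Category.comp_id]
  rfl

lemma liftChain_last {m : ℕ} (c : Chain C m) (x : D)
    (hx : P.obj x = c.obj (Fin.last m)) :
    (liftChain hcov c x hx).obj (Fin.last m) = x :=
  congrArg Subtype.val (liftObj_last hcov c x hx)

noncomputable def chainFiberEquiv {m : ℕ} (c : Chain C m) :
    {ct : Chain D m // ct.push P = c} ≃ {a : D // P.obj a = c.obj (Fin.last m)} := by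
  refine Equiv.ofBijective
    (fun u => ⟨u.1.obj (Fin.last m), congrArg (fun p => Chain.obj p (Fin.last m)) u.2⟩) ⟨?_, ?_⟩
  · intro u v h
    exact Subtype.ext (lift_unique hcov u.1 v.1 (u.2.trans v.2.symm)
      (congrArg Subtype.val h))
  · intro b
    exact ⟨⟨liftChain hcov c b.1 b.2, liftChain_push hcov c b.1 b.2⟩,
      Subtype.ext (liftChain_last hcov c b.1 b.2)⟩

noncomputable def chainEquiv (m : ℕ) :
    Chain D m ≃ Σ c : Chain C m, {a : D // P.obj a = c.obj (Fin.last m)} :=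
  ((Equiv.sigmaFiberEquiv (Chain.push P (n := m))).symm).trans
    (Equiv.sigmaCongrRight (chainFiberEquiv hcov))

lemma src_count' (d : ℕ) (a : D) (z : C) (ha : P.obj a = z) (g : Src C z)
    (hg : g ≠ ⟨z, 𝟙 z⟩) :
    Nat.card {h : Src D a // h ≠ ⟨a, 𝟙 a⟩ ∧ srcMap P a h = castSrc ha.symm g} = e a := by
  subst ha
  have hc : ∀ h : Src D a, (srcMap P a h = castSrc (Eq.symm rfl) g) ↔ (srcMap P a h = g) := by
    intro h; rw [castSrc_eqself]
  calc Nat.card {h : Src D a // h ≠ ⟨a, 𝟙 a⟩ ∧ srcMap P a h = castSrc (Eq.symm rfl) g}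
      = Nat.card {h : Src D a // h ≠ ⟨a, 𝟙 a⟩ ∧ srcMap P a h = g} := by
        apply Nat.card_congr
        exact Equiv.subtypeEquivRight (fun h => by rw [hc h])
    _ = e a := hcov.src_count a g hg

lemma card_fiber_of_nondeg [Finite D] [∀ a b : D, Finite (a ⟶ b)] {d : ℕ}
    (hd : IsDFold P e d) (z : C) (g : Src C z) (hg : g ≠ ⟨z, 𝟙 z⟩) :
    Nat.card {b : D // P.obj b = g.1} = d := by
  classical
  -- the sigma type of non-identity lifts of g
  let Lifts := Σ y : {a : D // P.obj a = z},
    {h : Src D y.1 // h ≠ ⟨y.1, 𝟙 y.1⟩ ∧ srcMap P y.1 h = castSrc y.2.symm g}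
  -- bijection with the fiber over the target of g
  have hbij : Nat.card Lifts = Nat.card {b : D // P.obj b = g.1} := by
    apply Nat.card_congr
    refine Equiv.ofBijective (fun u => ⟨u.2.1.1, congrArg Sigma.fst u.2.2.2⟩) ⟨?_, ?_⟩
    · intro u v h
      obtain ⟨⟨a, ha⟩, ⟨⟨b, f⟩, hnd, hh⟩⟩ := u
      obtain ⟨⟨a', ha'⟩, ⟨⟨b', f'⟩, hnd', hh'⟩⟩ := v
      have hb : b = b' := congrArg Subtype.val h
      subst hb
      have h1 := sigma_snd_eq hh
      have h1' := sigma_snd_eq hh'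
      dsimp [srcMap, castSrc] at h1 h1'
      have h2 : tgtMap P b ⟨a, f⟩ = tgtMap P b ⟨a', f'⟩ := by
        apply Tgt.ext' (h1 := ha.trans ha'.symm)
        dsimp [tgtMap]
        have e1 : P.map f = (eqToHom ha.symm.symm ≫ g.2) ≫
            eqToHom (congrArg Sigma.fst hh).symm := by rw [← h1]; erw [Category.assoc, eqToHom_trans, eqToHom_refl, Category.comp_id]
        have e1' : P.map f' = (eqToHom ha'.symm.symm ≫ g.2) ≫
            eqToHom (congrArg Sigma.fst hh').symm := by rw [← h1']; erw [Category.assoc, eqToHom_trans, eqToHom_refl, Category.comp_id]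
        rw [e1, e1']
        simp
        erw [eqToHom_trans_assoc]
        rfl
      have h3 := (hcov.tgt_bij b).1 h2
      have ha2 : a = a' := congrArg Sigma.fst h3
      subst ha2
      have hf : f = f' := by
        have := (Sigma.mk.inj_iff.mp h3).2
        exact eq_of_heq this
      subst hf
      rfl
    · rintro ⟨b, hb⟩
      set t := liftTgt hcov b (⟨z, g.2 ≫ eqToHom hb.symm⟩ : Tgt C (P.obj b)) with ht
      have hspec := liftTgt_spec hcov b (⟨z, g.2 ≫ eqToHom hb.symm⟩ : Tgt C (P.obj b))
      have ha : P.obj t.1 = z := congrArg Sigma.fst hspec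
      have hsnd := tgt_snd_eq hspec
      dsimp [tgtMap] at hsnd
      have hh : srcMap P t.1 ⟨b, t.2⟩ = castSrc ha.symm g := by
        refine Src.ext' (h1 := hb) ?_
        dsimp [srcMap, castSrc]
        rw [hsnd]
        simp
      refine ⟨⟨⟨t.1, ha⟩, ⟨⟨b, t.2⟩, ?_, hh⟩⟩, rfl⟩
      intro hcon
      apply hg
      rw [hcon] at hh
      have hid : castSrc ha.symm g = ⟨P.obj t.1, 𝟙 (P.obj t.1)⟩ := by
        rw [← hh]; dsimp [srcMap]; simp
      have hgg : g = castSrc ha.symm.symm (⟨P.obj t.1, 𝟙 (P.obj t.1)⟩ : Src C (P.obj t.1)) := by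
        rw [← hid, castSrc_cancel]
      rw [hgg]
      refine Src.ext' (h1 := ha) ?_
      dsimp [castSrc]
      simp
  -- count the lifts fiberwise
  have hcnt : Nat.card Lifts = d := by
    have hcomp : ∀ y : {a : D // P.obj a = z},
        Nat.card {h : Src D y.1 // h ≠ ⟨y.1, 𝟙 y.1⟩ ∧ srcMap P y.1 h = castSrc y.2.symm g}
          = Nat.card (Fin (e y.1)) := by
      intro y
      rw [src_count' hcov d y.1 z y.2 g hg]
      simp
    have hequiv : ∀ y : {a : D // P.obj a = z},
        Nonempty ({h : Src D y.1 // h ≠ ⟨y.1, 𝟙 y.1⟩ ∧ srcMap P y.1 h = castSrc y.2.symm g}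
          ≃ Fin (e y.1)) := by
      intro y
      have hft : Fintype {h : Src D y.1 // h ≠ ⟨y.1, 𝟙 y.1⟩ ∧ srcMap P y.1 h = castSrc y.2.symm g} :=
        Fintype.ofFinite _
      have hy := hcomp y
      rw [Nat.card_eq_fintype_card, Nat.card_eq_fintype_card] at hy
      exact ⟨Fintype.equivOfCardEq hy⟩
    have hEq : Lifts ≃ Σ y : {a : D // P.obj a = z}, Fin (e y.1) :=
      Equiv.sigmaCongrRight (fun y => Classical.choice (hequiv y))
    rw [Nat.card_congr hEq, hd z]
  rw [← hbij, hcnt]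

def fibSplitEquiv (x : C) :
    (Σ a : {a : D // P.obj a = x}, Fin (e a.1))
      ≃ ({a : D // P.obj a = x} ⊕ Σ a : {a : D // P.obj a = x}, Fin (e a.1 - 1)) :=
  (Equiv.sigmaCongrRight fun (a : {a : D // P.obj a = x}) =>
      (((finCongr (show e a.1 = 1 + (e a.1 - 1) by have := hcov.one_le a.1; omega)).trans
        finSumFinEquiv.symm) : Fin (e a.1) ≃ (Fin 1 ⊕ Fin (e a.1 - 1)))).trans
    ((Equiv.sigmaSumDistrib _ _).trans
      (Equiv.sumCongr (Equiv.sigmaUnique _ _) (Equiv.refl _)))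

lemma card_fib_add [Finite D] {d : ℕ} (hd : IsDFold P e d) (x : C) :
    Nat.card {a : D // P.obj a = x}
      + Nat.card (Σ a : {a : D // P.obj a = x}, Fin (e a.1 - 1)) = d := by
  rw [← Nat.card_sum, ← Nat.card_congr (fibSplitEquiv hcov x), hd x]

lemma morphism_into_ramified [Finite D] [∀ a b : D, Finite (a ⟶ b)] {d : ℕ}
    (hd : IsDFold P e d) {x : C} (a : D) (ha : P.obj a = x) (h2 : 2 ≤ e a) :
    ∀ (zz : C) (f : zz ⟶ x), (⟨x, f⟩ : Src C zz) = ⟨zz, 𝟙 zz⟩ := by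
  intro zz f
  by_contra hne
  have hball : Nat.card {b : D // P.obj b = x} = d :=
    card_fiber_of_nondeg hcov hd zz ⟨x, f⟩ hne
  have hsplit := card_fib_add hcov hd x
  have hpos : Nat.card (Σ b : {a : D // P.obj a = x}, Fin (e b.1 - 1)) ≠ 0 :=
    Nat.card_ne_zero.mpr ⟨⟨⟨⟨a, ha⟩, ⟨0, show 0 < e a - 1 by omega⟩⟩⟩, inferInstance⟩
  omega

omit hcov in
lemma chain_const_of_ramified {x : C}
    (hx : ∀ (zz : C) (f : zz ⟶ x), (⟨x, f⟩ : Src C zz) = ⟨zz, 𝟙 zz⟩)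
    {m : ℕ} (c : Chain C m) (hc : c.obj (Fin.last m) = x) : c = Chain.const C x m := by
  have hobj : ∀ i, c.obj i = x := by
    intro i
    induction i using Fin.reverseInduction with
    | last => exact hc
    | cast i ih =>
        have := hx (c.obj i.castSucc) (c.map i ≫ eqToHom ih)
        exact (congrArg Sigma.fst this).symm
  refine Chain.ext' hobj ?_
  intro i
  have h := hx (c.obj i.castSucc) (c.map i ≫ eqToHom (hobj i.succ))
  have h2 := sigma_snd_eq h
  dsimp only at h2
  rw [comp_eqToHom_iff] at h2
  refine h2.trans ?_
  simp [Chain.const]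

omit hcov in
lemma sigma_fiber_equiv_D (F : D → Type*) :
    Nonempty ((Σ a : D, F a) ≃ (Σ x : C, Σ y : {a : D // P.obj a = x}, F y.1)) := by
  refine ⟨{
    toFun := fun u => ⟨P.obj u.1, ⟨u.1, rfl⟩, u.2⟩
    invFun := fun v => ⟨v.2.1.1, v.2.2⟩
    left_inv := fun u => rfl
    right_inv := ?_ }⟩
  rintro ⟨x, ⟨a, ha⟩, w⟩
  subst ha
  rfl

omit hcov in
noncomputable def rigidEquiv [Finite D] [∀ a b : D, Finite (a ⟶ b)]
    (hco : IsRamifiedCovering P e) {d : ℕ} (hd : IsDFold P e d) (m : ℕ) :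
    (Σ c : Chain C m, Σ y : {a : D // P.obj a = c.obj (Fin.last m)}, Fin (e y.1 - 1))
      ≃ (Σ x : C, Σ y : {a : D // P.obj a = x}, Fin (e y.1 - 1)) where
  toFun u := ⟨u.1.obj (Fin.last m), u.2⟩
  invFun v := ⟨Chain.const C v.1 m, v.2⟩
  left_inv u := by
    obtain ⟨c, w⟩ := u
    dsimp only
    have h2 : 2 ≤ e w.1.1 := by
      have h3 := hco.one_le w.1.1
      have h4 : (w.2 : ℕ) < e w.1.1 - 1 := w.2.2
      omega
    have hconst : c = Chain.const C (c.obj (Fin.last m)) m :=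
      chain_const_of_ramified (morphism_into_ramified hco hd w.1.1 w.1.2 h2) c rfl
    clear h2
    revert w
    rw [hconst]
    intro w
    rfl
  right_inv v := by
    obtain ⟨x, w⟩ := v
    rfl

omit hcov in
lemma nat_card_equiv_of_eq {α : Type*} {β : Type*} [Finite α] [Finite β]
    (h : Nat.card α = Nat.card β) : Nonempty (α ≃ β) := by
  have hA := Fintype.ofFinite α
  have hB := Fintype.ofFinite β
  rw [Nat.card_eq_fintype_card, Nat.card_eq_fintype_card] at h
  exact ⟨Fintype.equivOfCardEq h⟩

omit hcov in
lemma card_sigma_const {ι : Type*} [Finite ι] (G : ι → Type*) [∀ i, Finite (G i)] {d : ℕ}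
    (h : ∀ i, Nat.card (G i) = d) : Nat.card (Σ i, G i) = Nat.card ι * d := by
  have he : ∀ i, Nonempty (G i ≃ Fin d) := fun i =>
    nat_card_equiv_of_eq (by simp [h i])
  have E := fun i => Classical.choice (he i)
  rw [Nat.card_congr ((Equiv.sigmaCongrRight E).trans (Equiv.sigmaEquivProd ι (Fin d))),
    Nat.card_prod]
  congr 1
  rw [Nat.card_eq_fintype_card, Fintype.card_fin]

lemma main_count [Finite D] [∀ a b : D, Finite (a ⟶ b)] [Finite C] [∀ a b : C, Finite (a ⟶ b)]
    {d : ℕ} (hd : IsDFold P e d) (m : ℕ) :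
    d * Nat.card (Chain C m) = Nat.card (Chain D m) + Nat.card (Σ a : D, Fin (e a - 1)) := by
  have h1 : Nat.card (Σ c : Chain C m, Σ y : {a : D // P.obj a = c.obj (Fin.last m)}, Fin (e y.1))
      = Nat.card (Chain C m) * d :=
    card_sigma_const _ (fun c => hd (c.obj (Fin.last m)))
  have h2 : Nat.card (Σ c : Chain C m, Σ y : {a : D // P.obj a = c.obj (Fin.last m)}, Fin (e y.1))
      = Nat.card (Σ c : Chain C m, {a : D // P.obj a = c.obj (Fin.last m)})
        + Nat.card (Σ c : Chain C m,
            Σ y : {a : D // P.obj a = c.obj (Fin.last m)}, Fin (e y.1 - 1)) := by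
    rw [Nat.card_congr ((Equiv.sigmaCongrRight
      (fun (c : Chain C m) => fibSplitEquiv hcov (c.obj (Fin.last m)))).trans
        (Equiv.sigmaSumDistrib _ _)), Nat.card_sum]
  have h3 : Nat.card (Σ c : Chain C m, {a : D // P.obj a = c.obj (Fin.last m)})
      = Nat.card (Chain D m) := (Nat.card_congr (chainEquiv hcov m)).symm
  have h4 : Nat.card (Σ c : Chain C m,
        Σ y : {a : D // P.obj a = c.obj (Fin.last m)}, Fin (e y.1 - 1))
      = Nat.card (Σ a : D, Fin (e a - 1)) :=
    Nat.card_congr ((rigidEquiv hcov hd m).trans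
      (Classical.choice (sigma_fiber_equiv_D (P := P) (fun a => Fin (e a - 1)))).symm)
  rw [mul_comm, ← h1, h2, h3, h4]

end Cover

section Count

lemma card_sigma_fin_eq_sum {D : Type u} [Fintype D] (f : D → ℕ) :
    Nat.card (Σ a : D, Fin (f a)) = ∑ a : D, f a := by
  classical
  rw [Nat.card_eq_fintype_card, Fintype.card_sigma]
  simp

end Count

end RamAux

/-- For a `d`-fold ramified covering of finite categories, the zeta
function of `C` divides that of `C̃`; precisely
`ζ_{C̃}(z) = ζ_C(z)^d · (1 − z)^V` with `V = Σ_{xt ∈ Ob(C̃)} (e(xt) − 1)`. -/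
theorem ramifiedCovering_zeta {D C : Type u}
    [SmallCategory D] [SmallCategory C]
    [Fintype D] [Fintype C] [∀ a b : D, Finite (a ⟶ b)] [∀ a b : C, Finite (a ⟶ b)]
    (P : D ⥤ C) (e : D → ℕ) (d : ℕ)
    (h : IsRamifiedCovering P e) (hd : IsDFold P e d) :
    catZeta D = catZeta C ^ d * (1 - PowerSeries.X) ^ (∑ a : D, (e a - 1)) := by
  classical
  set V := ∑ a : D, (e a - 1) with hV
  have hVcard : Nat.card (Σ a : D, Fin (e a - 1)) = V := RamAux.card_sigma_fin_eq_sum _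
  have hcount : ∀ m : ℕ, d * Nat.card (Chain C m) = Nat.card (Chain D m) + V := by
    intro m
    rw [← hVcard]
    exact RamAux.main_count h hd m
  have hC0 : PowerSeries.constantCoeff
      (PowerSeries.mk fun m => if m = 0 then 0 else (Nat.card (Chain C m) : ℚ) / m) = 0 := by
    rw [← PowerSeries.coeff_zero_eq_constantCoeff_apply, PowerSeries.coeff_mk]
    simp
  have hL0 : PowerSeries.constantCoeff ExpAux.L = 0 := by
    rw [← PowerSeries.coeff_zero_eq_constantCoeff_apply, ExpAux.L, PowerSeries.coeff_mk]
    simp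
  have hfD : (PowerSeries.mk fun m => if m = 0 then 0 else (Nat.card (Chain D m) : ℚ) / m)
      = d • (PowerSeries.mk fun m => if m = 0 then 0 else (Nat.card (Chain C m) : ℚ) / m)
        + V • ExpAux.L := by
    ext n
    rw [PowerSeries.coeff_mk, map_add, map_nsmul, map_nsmul, PowerSeries.coeff_mk,
      ExpAux.L, PowerSeries.coeff_mk]
    rcases n with _ | n
    · simp
    · have hc := hcount (n + 1)
      have hq : (Nat.card (Chain D (n + 1)) : ℚ)
          = d * (Nat.card (Chain C (n + 1)) : ℚ) - V := by
        have hcast : ((d * Nat.card (Chain C (n + 1)) : ℕ) : ℚ)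
            = ((Nat.card (Chain D (n + 1)) + V : ℕ) : ℚ) := Nat.cast_inj.mpr hc
        push_cast at hcast
        linarith
      rw [if_neg (Nat.succ_ne_zero n), if_neg (Nat.succ_ne_zero n), if_neg (Nat.succ_ne_zero n)]
      rw [nsmul_eq_mul, nsmul_eq_mul, hq]
      push_cast
      ring
  unfold catZeta
  rw [hfD,
    ExpAux.formalExp_add (by rw [map_nsmul, hC0, smul_zero]) (by rw [map_nsmul, hL0, smul_zero]),
    ExpAux.formalExp_nsmul hC0 d, ExpAux.formalExp_nsmul hL0 V, ExpAux.formalExp_L]
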